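/- For the Haar measure μ on pure n-qubit states, any density matrix ρ, and any traceless Hermitian matrix O₀ (Tr(O₀)=0), it holds that 2^n(2^n+1)² · Tr((∫|φ⟩⟨φ|^{⊗3} dμ(φ)) · (ρ ⊗ O₀ ⊗ O₀)) ≤ 3·Tr(O₀²). -/

import Mathlib

open Matrix ComplexOrder

/-- The operator permuting the three tensor factors of `(ℂ^N)^{⊗3}` according to `π`. -/
noncomputable def permOp3 (N : ℕ) (π : Equiv.Perm (Fin 3)) :
    Matrix (Fin 3 → Fin N) (Fin 3 → Fin N) ℂ :=
  fun a b => if a = b ∘ π then 1 else 0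

/-- The projector onto the symmetric subspace of `(ℂ^N)^{⊗3}`:
`Π_{sym³} = (1/6)∑_{π∈S₃} W_π`. -/
noncomputable def symProj3 (N : ℕ) : Matrix (Fin 3 → Fin N) (Fin 3 → Fin N) ℂ :=
  ((6 : ℂ))⁻¹ • ∑ π : Equiv.Perm (Fin 3), permOp3 N π

/-- The third Haar moment `∫|φ⟩⟨φ|^{⊗3} dμ = Π_{sym³}/dim(sym³)` with
`dim(sym³) = N(N+1)(N+2)/6`. -/
noncomputable def haarMoment3 (N : ℕ) : Matrix (Fin 3 → Fin N) (Fin 3 → Fin N) ℂ :=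
  (((N : ℂ) * ((N : ℂ) + 1) * ((N : ℂ) + 2) / 6))⁻¹ • symProj3 N

/-- Threefold tensor (Kronecker) product as a matrix on `(ℂ^N)^{⊗3}`. -/
noncomputable def kron3 {N : ℕ} (A B C : Matrix (Fin N) (Fin N) ℂ) :
    Matrix (Fin 3 → Fin N) (Fin 3 → Fin N) ℂ :=
  fun a b => A (a 0) (b 0) * B (a 1) (b 1) * C (a 2) (b 2)

/-! ### Auxiliary positivity lemmas -/

lemma aux_trace_nn {m : Type*} [Fintype m] [DecidableEq m] {A : Matrix m m ℂ}
    (hA : A.PosSemidef) : 0 ≤ A.trace := by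
  rw [Matrix.trace]
  apply Finset.sum_nonneg
  intro i _
  have := hA.dotProduct_mulVec_nonneg (Pi.single i 1)
  simpa [dotProduct, Matrix.mulVec, Pi.single_apply, Finset.mul_sum] using this

open scoped MatrixOrder in
lemma aux_trace_mul_nn {m : Type*} [Fintype m] [DecidableEq m] {A B : Matrix m m ℂ}
    (hA : A.PosSemidef) (hB : B.PosSemidef) : 0 ≤ (A * B).trace := by
  have h1 : (A * B).trace = (CFC.sqrt B * A * CFC.sqrt B).trace := by
    conv_lhs => rw [← CFC.sqrt_mul_sqrt_self B hB.nonneg, ← Matrix.mul_assoc]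
    rw [Matrix.trace_mul_cycle]
  rw [h1]
  apply aux_trace_nn
  have := hA.conjTranspose_mul_mul_same (CFC.sqrt B)
  rwa [(CFC.sqrt_nonneg B).posSemidef.1.eq] at this

lemma aux_one_sub_psd {m : Type*} [Fintype m] [DecidableEq m] {ρ : Matrix m m ℂ}
    (hρ : ρ.PosSemidef) (h1 : ρ.trace = 1) : (1 - ρ : Matrix m m ℂ).PosSemidef := by
  have hH := hρ.1
  have hU : (hH.eigenvectorUnitary : Matrix m m ℂ) * star (hH.eigenvectorUnitary : Matrix m m ℂ) = 1 :=
    (Matrix.mem_unitaryGroup_iff).mp hH.eigenvectorUnitary.2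
  have hU' : star (hH.eigenvectorUnitary : Matrix m m ℂ) * (hH.eigenvectorUnitary : Matrix m m ℂ) = 1 :=
    (Matrix.mem_unitaryGroup_iff').mp hH.eigenvectorUnitary.2
  have hspec := hH.spectral_theorem
  rw [Unitary.conjStarAlgAut_apply] at hspec
  have htr : ∑ i, (hH.eigenvalues i : ℂ) = 1 := by
    have : ρ.trace = (Matrix.diagonal (RCLike.ofReal ∘ hH.eigenvalues) : Matrix m m ℂ).trace := by
      conv_lhs => rw [hspec]
      rw [Matrix.trace_mul_cycle, hU', Matrix.one_mul]
    rw [h1] at this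
    simpa [Matrix.trace_diagonal] using this.symm
  have hsum : ∑ i, hH.eigenvalues i = 1 := by
    have := congrArg Complex.re htr
    simpa [Complex.re_sum] using this
  have hle : ∀ i, hH.eigenvalues i ≤ 1 := by
    intro i
    rw [← hsum]
    exact Finset.single_le_sum (f := hH.eigenvalues)
      (fun j _ => hρ.eigenvalues_nonneg j) (Finset.mem_univ i)
  have hdiag : (Matrix.diagonal (fun i => ((1 - hH.eigenvalues i : ℝ) : ℂ)) : Matrix m m ℂ).PosSemidef := by
    apply Matrix.PosSemidef.diagonal
    intro i
    simp only [Pi.zero_apply]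
    rw [show (0 : ℂ) = ((0 : ℝ) : ℂ) by norm_num, Complex.real_le_real]
    linarith [hle i]
  have key : (1 - ρ : Matrix m m ℂ) = (hH.eigenvectorUnitary : Matrix m m ℂ) *
      Matrix.diagonal (fun i => ((1 - hH.eigenvalues i : ℝ) : ℂ)) *
      star (hH.eigenvectorUnitary : Matrix m m ℂ) := by
    have hd : (Matrix.diagonal (fun i => ((1 - hH.eigenvalues i : ℝ) : ℂ)) : Matrix m m ℂ)
        = 1 - Matrix.diagonal (RCLike.ofReal ∘ hH.eigenvalues) := by
      ext i j
      by_cases h : i = j <;> simp [Matrix.diagonal, Matrix.one_apply, h, Function.comp]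
    rw [hd, Matrix.mul_sub, Matrix.sub_mul, Matrix.mul_one, hU, ← hspec]
  rw [key, Matrix.star_eq_conjTranspose]
  exact hdiag.mul_mul_conjTranspose_same _

/-! ### Sum manipulation lemmas -/

section SumPerm
variable {α : Type*} [Fintype α]

lemma aux_nested_eq_prod (f : α → α → α → ℂ) :
    ∑ x, ∑ y, ∑ z, f x y z = ∑ p : α × α × α, f p.1 p.2.1 p.2.2 := by
  rw [Fintype.sum_prod_type]
  exact Finset.sum_congr rfl fun x _ => (Fintype.sum_prod_type (fun p : α × α => f x p.1 p.2)).symm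

lemma aux_tswap13 (f : α → α → α → ℂ) :
    ∑ x, ∑ y, ∑ z, f x y z = ∑ x, ∑ y, ∑ z, f z y x := by
  rw [aux_nested_eq_prod, aux_nested_eq_prod]
  exact Fintype.sum_equiv ⟨fun p => (p.2.2, p.2.1, p.1), fun p => (p.2.2, p.2.1, p.1),
    fun p => rfl, fun p => rfl⟩ _ _ (fun p => rfl)

lemma aux_tcyc2 (f : α → α → α → ℂ) :
    ∑ x, ∑ y, ∑ z, f x y z = ∑ x, ∑ y, ∑ z, f z x y := by
  rw [aux_nested_eq_prod, aux_nested_eq_prod]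
  exact Fintype.sum_equiv ⟨fun p => (p.2.1, p.2.2, p.1), fun p => (p.2.2, p.1, p.2.1),
    fun p => rfl, fun p => rfl⟩ _ _ (fun p => rfl)

end SumPerm

section TraceComp
variable {N : ℕ} (A B C : Matrix (Fin N) (Fin N) ℂ)

lemma aux_t1 : ∑ x : Fin N, ∑ y, ∑ z, A x x * B y y * C z z = A.trace * B.trace * C.trace := by
  simp only [Matrix.trace, Matrix.diag, Finset.sum_mul, Finset.mul_sum]
  rw [aux_tswap13 (fun a b c => A a a * B b b * C c c)]

lemma aux_t2 : ∑ x : Fin N, ∑ y, ∑ z, A y x * B x y * C z z = (A * B).trace * C.trace := by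
  simp only [Matrix.trace, Matrix.diag, Matrix.mul_apply, Finset.sum_mul, Finset.mul_sum]
  rw [aux_tswap13 (fun a b c => A b a * B a b * C c c)]

lemma aux_t3 : ∑ x : Fin N, ∑ y, ∑ z, A z x * B y y * C x z = (A * C).trace * B.trace := by
  simp only [Matrix.trace, Matrix.diag, Matrix.mul_apply, Finset.sum_mul, Finset.mul_sum]
  rw [aux_tcyc2 (fun a b c => A c a * B b b * C a c)]
  exact Finset.sum_congr rfl fun x _ => Finset.sum_congr rfl fun y _ =>
    Finset.sum_congr rfl fun z _ => by ring

lemma aux_t4 : ∑ x : Fin N, ∑ y, ∑ z, A x x * B z y * C y z = A.trace * (B * C).trace := by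
  simp only [Matrix.trace, Matrix.diag, Matrix.mul_apply, Finset.sum_mul, Finset.mul_sum]
  rw [aux_tswap13 (fun a b c => A a a * B c b * C b c)]
  exact Finset.sum_congr rfl fun x _ => Finset.sum_congr rfl fun y _ =>
    Finset.sum_congr rfl fun z _ => by ring

lemma aux_t5 : ∑ x : Fin N, ∑ y, ∑ z, A z x * B x y * C y z = (A * B * C).trace := by
  simp only [Matrix.trace, Matrix.diag, Matrix.mul_apply, Finset.sum_mul, Finset.mul_sum]
  rw [aux_tswap13 (fun a b c => A c a * B a b * C b c)]

lemma aux_t6 : ∑ x : Fin N, ∑ y, ∑ z, A y x * B z y * C x z = (A * C * B).trace := by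
  simp only [Matrix.trace, Matrix.diag, Matrix.mul_apply, Finset.sum_mul, Finset.mul_sum]
  rw [aux_tcyc2 (fun a b c => A b a * B c b * C a c)]
  exact Finset.sum_congr rfl fun x _ => Finset.sum_congr rfl fun y _ =>
    Finset.sum_congr rfl fun z _ => by ring

end TraceComp

/-! ### Trace of permutation operators against kron3 -/

lemma aux_trace_permOp3_kron3 {N : ℕ} (π : Equiv.Perm (Fin 3)) (A B C : Matrix (Fin N) (Fin N) ℂ) :
    (permOp3 N π * kron3 A B C).trace
      = ∑ a : Fin 3 → Fin N,
          A (a (π⁻¹ 0)) (a 0) * B (a (π⁻¹ 1)) (a 1) * C (a (π⁻¹ 2)) (a 2) := by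
  rw [Matrix.trace]
  refine Finset.sum_congr rfl fun a _ => ?_
  rw [Matrix.diag_apply, Matrix.mul_apply]
  rw [Finset.sum_eq_single (a ∘ (π⁻¹ : Equiv.Perm (Fin 3)))]
  · rw [permOp3, kron3]
    simp only [Function.comp]
    rw [if_pos (by funext i; simp), one_mul]
  · intro b _ hb
    rw [permOp3]
    simp only [ite_mul, one_mul, zero_mul, kron3]
    rw [if_neg]
    intro h
    apply hb
    funext i
    have := congrFun h (π⁻¹ i)
    simpa using this.symm
  · simp

/-- Equivalence between triples and functions `Fin 3 → Fin N`. -/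
def aux_pi3Equiv (N : ℕ) : (Fin N × Fin N × Fin N) ≃ (Fin 3 → Fin N) where
  toFun p := ![p.1, p.2.1, p.2.2]
  invFun a := (a 0, a 1, a 2)
  left_inv p := rfl
  right_inv a := by funext i; fin_cases i <;> rfl

lemma aux_sum_pi3 {N : ℕ} (f : (Fin 3 → Fin N) → ℂ) :
    ∑ a : Fin 3 → Fin N, f a = ∑ x : Fin N, ∑ y : Fin N, ∑ z : Fin N, f ![x, y, z] := by
  rw [← Equiv.sum_comp (aux_pi3Equiv N) f]
  rw [Fintype.sum_prod_type]
  refine Finset.sum_congr rfl fun x _ => ?_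
  rw [Fintype.sum_prod_type]
  rfl

/-- The master formula: sum over all six permutations. -/
lemma aux_sum_perm_trace {N : ℕ} (A B C : Matrix (Fin N) (Fin N) ℂ) :
    ∑ π : Equiv.Perm (Fin 3), (permOp3 N π * kron3 A B C).trace
      = A.trace * B.trace * C.trace + (A * B).trace * C.trace + (A * C).trace * B.trace
        + A.trace * (B * C).trace + (A * B * C).trace + (A * C * B).trace := by
  have huniv : (Finset.univ : Finset (Equiv.Perm (Fin 3))) =
      {1, Equiv.swap 0 1, Equiv.swap 0 2, Equiv.swap 1 2,
       Equiv.swap 0 1 * Equiv.swap 1 2, Equiv.swap 1 2 * Equiv.swap 0 1} := by decide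
  rw [huniv, Finset.sum_insert (by decide), Finset.sum_insert (by decide),
    Finset.sum_insert (by decide), Finset.sum_insert (by decide),
    Finset.sum_insert (by decide), Finset.sum_singleton]
  rw [aux_trace_permOp3_kron3, aux_trace_permOp3_kron3, aux_trace_permOp3_kron3,
    aux_trace_permOp3_kron3, aux_trace_permOp3_kron3, aux_trace_permOp3_kron3]
  rw [show ((1 : Equiv.Perm (Fin 3))⁻¹ (0 : Fin 3)) = 0 from by decide,
    show ((1 : Equiv.Perm (Fin 3))⁻¹ (1 : Fin 3)) = 1 from by decide,
    show ((1 : Equiv.Perm (Fin 3))⁻¹ (2 : Fin 3)) = 2 from by decide,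
    show ((Equiv.swap (0:Fin 3) 1)⁻¹ (0 : Fin 3)) = 1 from by decide,
    show ((Equiv.swap (0:Fin 3) 1)⁻¹ (1 : Fin 3)) = 0 from by decide,
    show ((Equiv.swap (0:Fin 3) 1)⁻¹ (2 : Fin 3)) = 2 from by decide,
    show ((Equiv.swap (0:Fin 3) 2)⁻¹ (0 : Fin 3)) = 2 from by decide,
    show ((Equiv.swap (0:Fin 3) 2)⁻¹ (1 : Fin 3)) = 1 from by decide,
    show ((Equiv.swap (0:Fin 3) 2)⁻¹ (2 : Fin 3)) = 0 from by decide,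
    show ((Equiv.swap (1:Fin 3) 2)⁻¹ (0 : Fin 3)) = 0 from by decide,
    show ((Equiv.swap (1:Fin 3) 2)⁻¹ (1 : Fin 3)) = 2 from by decide,
    show ((Equiv.swap (1:Fin 3) 2)⁻¹ (2 : Fin 3)) = 1 from by decide,
    show (((Equiv.swap 0 1 * Equiv.swap 1 2 : Equiv.Perm (Fin 3)))⁻¹ (0 : Fin 3)) = 2 from by decide,
    show (((Equiv.swap 0 1 * Equiv.swap 1 2 : Equiv.Perm (Fin 3)))⁻¹ (1 : Fin 3)) = 0 from by decide,
    show (((Equiv.swap 0 1 * Equiv.swap 1 2 : Equiv.Perm (Fin 3)))⁻¹ (2 : Fin 3)) = 1 from by decide,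
    show (((Equiv.swap 1 2 * Equiv.swap 0 1 : Equiv.Perm (Fin 3)))⁻¹ (0 : Fin 3)) = 1 from by decide,
    show (((Equiv.swap 1 2 * Equiv.swap 0 1 : Equiv.Perm (Fin 3)))⁻¹ (1 : Fin 3)) = 2 from by decide,
    show (((Equiv.swap 1 2 * Equiv.swap 0 1 : Equiv.Perm (Fin 3)))⁻¹ (2 : Fin 3)) = 0 from by decide]
  rw [aux_sum_pi3, aux_sum_pi3, aux_sum_pi3, aux_sum_pi3, aux_sum_pi3, aux_sum_pi3]
  simp only [Matrix.cons_val_zero, Matrix.cons_val_one, Matrix.head_cons,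
    Matrix.cons_val_two, Matrix.tail_cons]
  rw [aux_t1, aux_t2, aux_t3, aux_t4, aux_t5, aux_t6]
  ring

/-- Haar third-moment bound: for a density matrix `ρ` and traceless Hermitian `O₀`,
`2^n(2^n+1)² Tr(H₃ (ρ ⊗ O₀ ⊗ O₀)) ≤ 3 Tr(O₀²)`. -/
theorem stmt6 (n : ℕ) (ρ O₀ : Matrix (Fin (2 ^ n)) (Fin (2 ^ n)) ℂ)
    (hρ : ρ.PosSemidef) (hρtr : ρ.trace = 1)
    (hO : O₀.IsHermitian) (hOtr : O₀.trace = 0) :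
    (2 ^ n : ℝ) * ((2 ^ n : ℝ) + 1) ^ 2 *
        ((haarMoment3 (2 ^ n) * kron3 ρ O₀ O₀).trace).re
      ≤ 3 * ((O₀ * O₀).trace).re := by
  -- positivity facts
  have hOO : (O₀ * O₀).PosSemidef := by
    have := Matrix.posSemidef_conjTranspose_mul_self O₀
    rwa [hO.eq] at this
  have hT : (0 : ℂ) ≤ (O₀ * O₀).trace := aux_trace_nn hOO
  have hR : (0 : ℂ) ≤ (ρ * (O₀ * O₀)).trace := aux_trace_mul_nn hρ hOO
  have hRT : (0 : ℂ) ≤ ((1 - ρ) * (O₀ * O₀)).trace :=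
    aux_trace_mul_nn (aux_one_sub_psd hρ hρtr) hOO
  have hsub : ((1 - ρ) * (O₀ * O₀)).trace = (O₀ * O₀).trace - (ρ * (O₀ * O₀)).trace := by
    rw [Matrix.sub_mul, Matrix.one_mul, Matrix.trace_sub]
  set T : ℝ := ((O₀ * O₀).trace).re with hTdef
  set R : ℝ := ((ρ * (O₀ * O₀)).trace).re with hRdef
  have hT0 : 0 ≤ T := by
    have := hT; rw [Complex.le_def] at this; exact this.1
  have hR0 : 0 ≤ R := by
    have := hR; rw [Complex.le_def] at this; exact this.1
  have hRleT : R ≤ T := by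
    have := hRT
    rw [hsub, Complex.le_def] at this
    have h1 := this.1
    simp only [Complex.sub_re, Complex.zero_re] at h1
    linarith
  have htrace : (haarMoment3 (2 ^ n) * kron3 ρ O₀ O₀).trace
      = ((((2 ^ n : ℕ) : ℂ) * (((2 ^ n : ℕ) : ℂ)+ 1) * (((2 ^ n : ℕ) : ℂ) + 2) / 6))⁻¹ * ((6 : ℂ))⁻¹ *
        ((O₀ * O₀).trace + 2 * (ρ * (O₀ * O₀)).trace) := by
    rw [haarMoment3, symProj3, Matrix.smul_mul, Matrix.trace_smul, Matrix.smul_mul,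
      Matrix.trace_smul, smul_eq_mul, smul_eq_mul, Matrix.sum_mul, Matrix.trace_sum,
      aux_sum_perm_trace, hρtr, hOtr]
    rw [show ρ * O₀ * O₀ = ρ * (O₀ * O₀) from by rw [Matrix.mul_assoc]]
    ring
  have hre : ((haarMoment3 (2 ^ n) * kron3 ρ O₀ O₀).trace).re
      = (T + 2 * R) / (((2 ^ n : ℕ) : ℝ) * (((2 ^ n : ℕ) : ℝ) + 1) * (((2 ^ n : ℕ) : ℝ) + 2)) := by
    rw [htrace]
    have h6 : ((((2 ^ n : ℕ) : ℂ) * (((2 ^ n : ℕ) : ℂ) + 1) * (((2 ^ n : ℕ) : ℂ) + 2) / 6))⁻¹ * ((6 : ℂ))⁻¹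
        = (((((2 ^ n : ℕ) : ℝ) * (((2 ^ n : ℕ) : ℝ) + 1) * (((2 ^ n : ℕ) : ℝ) + 2) : ℝ))⁻¹ : ℂ) := by
      push_cast
      rw [← mul_inv, div_mul_cancel₀ _ (by norm_num : (6:ℂ) ≠ 0)]
    rw [h6]
    rw [show ((((((2 ^ n : ℕ) : ℝ) * (((2 ^ n : ℕ) : ℝ) + 1) * (((2 ^ n : ℕ) : ℝ) + 2) : ℝ))⁻¹ : ℂ)) *
        ((O₀ * O₀).trace + 2 * (ρ * (O₀ * O₀)).trace)
        = ((O₀ * O₀).trace + 2 * (ρ * (O₀ * O₀)).trace) /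
          (((((2 ^ n : ℕ) : ℝ) * (((2 ^ n : ℕ) : ℝ) + 1) * (((2 ^ n : ℕ) : ℝ) + 2) : ℝ)) : ℂ) from by ring]
    rw [Complex.div_ofReal_re]
    congr 1
    simp [Complex.add_re, Complex.mul_re, hTdef, hRdef]
  rw [hre]
  have hm : ((2 : ℝ) ^ n) = ((2 ^ n : ℕ) : ℝ) := by push_cast; ring
  rw [hm]
  have hNpos : (0 : ℝ) < ((2 ^ n : ℕ) : ℝ) := by positivity
  set m : ℝ := ((2 ^ n : ℕ) : ℝ)
  rw [← mul_div_assoc, div_le_iff₀ (by positivity)]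
  have hmm : (0:ℝ) ≤ m * (m + 1) := by positivity
  have key : (m + 1) * (T + 2 * R) ≤ (m + 2) * (3 * T) := by nlinarith
  nlinarith [mul_le_mul_of_nonneg_left key hmm]
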